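/- Stirling lower bound for the perfect case (precise form of Lemma 3.6): assume m divides u as well as n, set β := u/m and α := n/m with α ≥ 1 and n < u. Then C(u,n) / C(β,α)^m ≥ (2πα)^{(m−1)/2} · (1 − n/u)^{(m−1)/2} · m^{−1/2} · exp( 1/(12u+1) + m/(12(β−α)+1) + m/(12α+1) − 1/(12(u−n)) − 1/(12n) − m/(12β) ), where C(a,b) denotes the binomial coefficient 'a choose b'. -/

import Mathlib

open Real

open Filter Stirling Topology

private lemma three_pow_aux (k : ℕ) : 2 * k + 3 ≤ 3 ^ (k + 1) := by
  induction k with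
  | zero => norm_num
  | succ k ih => rw [pow_succ]; nlinarith [ih]

private lemma diff_ge (n : ℕ) :
    1 / (12 * ((n:ℝ) + 1) + 1) - 1 / (12 * ((n:ℝ) + 2) + 1) ≤
      log (stirlingSeq (n + 1)) - log (stirlingSeq (n + 2)) := by
  obtain ⟨y, hy⟩ : ∃ y : ℝ, y = (1 / (2 * ((n:ℝ) + 1) + 1)) ^ 2 := ⟨_, rfl⟩
  have hy0 : 0 ≤ y := hy ▸ sq_nonneg _
  have hy9 : y ≤ 1 / 9 := by
    rw [hy, div_pow, one_pow]
    rw [div_le_div_iff₀ (by positivity) (by norm_num)]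
    nlinarith [sq_nonneg ((n:ℝ)), Nat.cast_nonneg (α := ℝ) n]
  have hg : HasSum (fun k : ℕ => (y / 3) ^ (k + 1)) ((y / 3) * (1 - y / 3)⁻¹) := by
    have h := hasSum_geometric_of_lt_one (r := y/3) (by positivity) (by nlinarith)
    have h' := h.mul_left (y/3)
    simp_rw [← _root_.pow_succ'] at h'
    exact h'
  have hs := log_stirlingSeq_diff_hasSum n
  have hle : (y / 3) * (1 - y / 3)⁻¹ ≤ log (stirlingSeq (n + 1)) - log (stirlingSeq (n + 2)) := by
    refine hasSum_le (fun k => ?_) hg hs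
    have h1 : ((1:ℝ)/3) ^ (k+1) ≤ 1 / (2 * ((k:ℝ) + 1) + 1) := by
      rw [div_pow, one_pow]
      rw [div_le_div_iff₀ (by positivity) (by positivity)]
      have h3 : ((2 * k + 3 : ℕ) : ℝ) ≤ ((3 ^ (k+1) : ℕ) : ℝ) := by exact_mod_cast three_pow_aux k
      push_cast at h3
      nlinarith [h3]
    have h2 : (0:ℝ) ≤ y ^ (k + 1) := pow_nonneg hy0 _
    show (y/3)^(k+1) ≤ 1 / (2 * (↑(k + 1):ℝ) + 1) * ((1 / (2 * (↑(n + 1):ℝ) + 1)) ^ 2) ^ (k+1)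
    push_cast
    rw [← hy]
    calc (y / 3) ^ (k + 1) = (1/3:ℝ)^(k+1) * y ^ (k+1) := by
          rw [div_eq_mul_inv, mul_pow]; ring_nf
      _ ≤ (1 / (2 * ((k:ℝ) + 1) + 1)) * y ^ (k+1) := mul_le_mul_of_nonneg_right h1 h2
  refine le_trans ?_ hle
  have hden : (0:ℝ) < 1 - y / 3 := by nlinarith
  rw [← div_eq_mul_inv]
  rw [div_sub_div _ _ (by positivity) (by positivity), div_le_div_iff₀ (by positivity) hden]
  have hN : (0:ℝ) ≤ (n:ℝ) := Nat.cast_nonneg n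
  rw [hy]
  field_simp
  nlinarith [sq_nonneg ((n:ℝ)), hN]

private lemma diff_le (n : ℕ) :
    log (stirlingSeq (n + 1)) - log (stirlingSeq (n + 2)) ≤
      1 / (12 * ((n:ℝ) + 1)) - 1 / (12 * ((n:ℝ) + 2)) := by
  obtain ⟨y, hy⟩ : ∃ y : ℝ, y = (1 / (2 * ((n:ℝ) + 1) + 1)) ^ 2 := ⟨_, rfl⟩
  have hy0 : 0 ≤ y := hy ▸ sq_nonneg _
  have hy9 : y ≤ 1 / 9 := by
    rw [hy, div_pow, one_pow]
    rw [div_le_div_iff₀ (by positivity) (by norm_num)]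
    nlinarith [sq_nonneg ((n:ℝ)), Nat.cast_nonneg (α := ℝ) n]
  have hg : HasSum (fun k : ℕ => (1/3) * y ^ (k + 1)) ((y/3) * (1 - y)⁻¹) := by
    have h := hasSum_geometric_of_lt_one (r := y) hy0 (by nlinarith)
    have h' := (h.mul_left y).mul_left (1/3)
    simp_rw [← _root_.pow_succ'] at h'
    rw [show (y/3) * (1 - y)⁻¹ = 1/3 * (y * (1 - y)⁻¹) by ring]
    exact h'
  have hs := log_stirlingSeq_diff_hasSum n
  have hle : log (stirlingSeq (n + 1)) - log (stirlingSeq (n + 2)) ≤ (y/3) * (1 - y)⁻¹ := by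
    refine hasSum_le (fun k => ?_) hs hg
    show 1 / (2 * (↑(k + 1):ℝ) + 1) * ((1 / (2 * (↑(n + 1):ℝ) + 1)) ^ 2) ^ (k+1) ≤ _
    push_cast
    rw [← hy]
    have h2 : (0:ℝ) ≤ y ^ (k + 1) := pow_nonneg hy0 _
    have h1 : 1 / (2 * ((k:ℝ) + 1) + 1) ≤ 1/3 := by
      rw [div_le_div_iff₀ (by positivity) (by norm_num)]
      have : (0:ℝ) ≤ (k:ℝ) := Nat.cast_nonneg k
      nlinarith
    exact mul_le_mul_of_nonneg_right h1 h2
  refine hle.trans ?_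
  have hden : (0:ℝ) < 1 - y := by nlinarith
  rw [← div_eq_mul_inv]
  rw [div_sub_div _ _ (by positivity) (by positivity), div_le_div_iff₀ hden (by positivity)]
  have hN : (0:ℝ) ≤ (n:ℝ) := Nat.cast_nonneg n
  rw [hy]
  field_simp
  nlinarith [sq_nonneg ((n:ℝ)), hN]

private lemma tendsto_log_stirling :
    Tendsto (fun k : ℕ => log (stirlingSeq k)) atTop (𝓝 (log (√π))) := by
  have hcont : ContinuousAt log (√π) := Real.continuousAt_log (by positivity)
  exact hcont.tendsto.comp tendsto_stirlingSeq_sqrt_pi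

private lemma tendsto_inv12 (c : ℝ) :
    Tendsto (fun k : ℕ => 1 / (12 * (k:ℝ) + c)) atTop (𝓝 0) := by
  have h : Tendsto (fun k : ℕ => 12 * (k:ℝ) + c) atTop atTop :=
    tendsto_atTop_add_const_right _ c
      ((tendsto_natCast_atTop_atTop (R := ℝ)).const_mul_atTop (by norm_num))
  simpa [one_div, Pi.inv_def] using h.inv_tendsto_atTop

/-- Robbins upper bound, log form -/
private lemma robbins_upper (n : ℕ) (hn : 1 ≤ n) :
    log (stirlingSeq n) ≤ log (√π) + 1 / (12 * (n:ℝ)) := by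
  have key : ∀ k, n ≤ k → log (stirlingSeq n) - 1 / (12 * (n:ℝ)) ≤
      log (stirlingSeq k) - 1 / (12 * (k:ℝ)) := by
    intro k hk
    induction k, hk using Nat.le_induction with
    | base => exact le_rfl
    | succ k hk ih =>
      refine ih.trans ?_
      obtain ⟨j, rfl⟩ := Nat.exists_eq_add_of_le (hn.trans hk)
      rw [add_comm 1 j, show j+1+1 = j+2 from rfl]
      have := diff_le j
      push_cast
      push_cast at this
      linarith
  have hlim : Tendsto (fun k : ℕ => log (stirlingSeq k) - 1 / (12 * (k:ℝ))) atTop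
      (𝓝 (log (√π))) := by
    simpa using tendsto_log_stirling.sub (tendsto_inv12 0)
  have := ge_of_tendsto hlim (eventually_atTop.2 ⟨n, fun k hk => key k hk⟩)
  linarith

/-- Robbins lower bound, log form -/
private lemma robbins_lower (n : ℕ) (hn : 1 ≤ n) :
    log (√π) + 1 / (12 * (n:ℝ) + 1) ≤ log (stirlingSeq n) := by
  have key : ∀ k, n ≤ k → log (stirlingSeq k) - 1 / (12 * (k:ℝ) + 1) ≤
      log (stirlingSeq n) - 1 / (12 * (n:ℝ) + 1) := by
    intro k hk
    induction k, hk using Nat.le_induction with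
    | base => exact le_rfl
    | succ k hk ih =>
      refine le_trans ?_ ih
      obtain ⟨j, rfl⟩ := Nat.exists_eq_add_of_le (hn.trans hk)
      rw [add_comm 1 j, show j+1+1 = j+2 from rfl]
      have := diff_ge j
      push_cast
      push_cast at this
      linarith
  have hlim : Tendsto (fun k : ℕ => log (stirlingSeq k) - 1 / (12 * (k:ℝ) + 1)) atTop
      (𝓝 (log (√π))) := by
    simpa using tendsto_log_stirling.sub (tendsto_inv12 1)
  have := le_of_tendsto hlim (eventually_atTop.2 ⟨n, fun k hk => key k hk⟩)
  linarith

private lemma log_factorial_eq (n : ℕ) (hn : 1 ≤ n) :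
    Real.log (n.factorial : ℝ) = log (stirlingSeq n) + 1/2 * log (2*(n:ℝ)) + (n:ℝ) * log n - n := by
  have hn0 : (0:ℝ) < (n:ℝ) := by exact_mod_cast hn
  have h := log_stirlingSeq_formula n
  rw [log_div (by positivity) (exp_ne_zero 1), log_exp] at h
  ring_nf at h ⊢
  linarith

private lemma log_factorial_ge (n : ℕ) (hn : 1 ≤ n) :
    log (√π) + 1 / (12*(n:ℝ)+1) + 1/2 * log (2*(n:ℝ)) + (n:ℝ) * log n - n
      ≤ Real.log (n.factorial : ℝ) := by
  rw [log_factorial_eq n hn]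
  have := robbins_lower n hn
  linarith

private lemma log_factorial_le (n : ℕ) (hn : 1 ≤ n) :
    Real.log (n.factorial : ℝ) ≤
      log (√π) + 1 / (12*(n:ℝ)) + 1/2 * log (2*(n:ℝ)) + (n:ℝ) * log n - n := by
  rw [log_factorial_eq n hn]
  have := robbins_upper n hn
  linarith

/-- **Stirling lower bound for the perfect case** (precise form of Lemma 3.6):
with `β := u/m`, `α := n/m`, `α ≥ 1` and `n < u`,
`C(u,n) / C(β,α)^m ≥ (2πα)^((m−1)/2) · (1 − n/u)^((m−1)/2) · m^(−1/2) ·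
exp(1/(12u+1) + m/(12(β−α)+1) + m/(12α+1) − 1/(12(u−n)) − 1/(12n) − m/(12β))`. -/
theorem stirling_lower_bound_perfect (u m n : ℕ) (hm : 0 < m) (hmn : m ≤ n)
    (hnu : n < u) (hdu : m ∣ u) (hdn : m ∣ n) (hα : 1 ≤ n / m) :
    (Nat.choose u n : ℝ) / (Nat.choose (u / m) (n / m) : ℝ) ^ m ≥
      (2 * π * ((n : ℝ) / m)) ^ (((m : ℝ) - 1) / 2) *
      (1 - (n : ℝ) / u) ^ (((m : ℝ) - 1) / 2) *
      (m : ℝ) ^ (-(1 / 2) : ℝ) *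
      Real.exp (1 / (12 * (u : ℝ) + 1) + (m : ℝ) / (12 * ((u : ℝ) / m - (n : ℝ) / m) + 1)
        + (m : ℝ) / (12 * ((n : ℝ) / m) + 1) - 1 / (12 * ((u : ℝ) - n)) - 1 / (12 * (n : ℝ))
        - (m : ℝ) / (12 * ((u : ℝ) / m))) := by
  set A := n / m with hA'
  set B := u / m with hB'
  have hmA : m * A = n := Nat.mul_div_cancel' hdn
  have hmB : m * B = u := Nat.mul_div_cancel' hdu
  have hdK : m ∣ u - n := Nat.dvd_sub hdu hdn
  set G := (u - n) / m with hG'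
  have hmG : m * G = u - n := Nat.mul_div_cancel' hdK
  have hn1 : 1 ≤ n := hm.trans_le hmn
  have hu1 : 1 ≤ u := hn1.trans hnu.le
  have hK1 : 1 ≤ u - n := by omega
  have hA1 : 1 ≤ A := hα
  have hG1 : 1 ≤ G := by
    rcases Nat.eq_zero_or_pos G with h | h
    · rw [h, Nat.mul_zero] at hmG; omega
    · exact h
  have hAB : A ≤ B := Nat.div_le_div_right hnu.le
  have hB1 : 1 ≤ B := hA1.trans hAB
  have hBAG : B - A = G := by
    refine Nat.eq_of_mul_eq_mul_left hm ?_
    rw [Nat.mul_sub]; omega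
  -- real positivity and cast facts
  have hm0 : (0:ℝ) < (m:ℝ) := by exact_mod_cast hm
  have hA0 : (0:ℝ) < (A:ℝ) := by exact_mod_cast hA1
  have hB0 : (0:ℝ) < (B:ℝ) := by exact_mod_cast hB1
  have hG0 : (0:ℝ) < (G:ℝ) := by exact_mod_cast hG1
  have hn0 : (0:ℝ) < (n:ℝ) := by exact_mod_cast hn1
  have hu0 : (0:ℝ) < (u:ℝ) := by exact_mod_cast hu1
  have hK0 : (0:ℝ) < ((u - n : ℕ):ℝ) := by exact_mod_cast hK1
  have lu : (u:ℝ) = (m:ℝ) * B := by exact_mod_cast hmB.symm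
  have ln' : (n:ℝ) = (m:ℝ) * A := by exact_mod_cast hmA.symm
  have lk : ((u-n:ℕ):ℝ) = (m:ℝ) * G := by exact_mod_cast hmG.symm
  have cA : (n:ℝ) / m = (A:ℝ) := by rw [ln']; field_simp
  have cB : (u:ℝ) / m = (B:ℝ) := by rw [lu]; field_simp
  have cK : (u:ℝ) - n = ((u-n:ℕ):ℝ) := by
    rw [Nat.cast_sub hnu.le]
  have cBA : (B:ℝ) = (A:ℝ) + G := by exact_mod_cast (by omega : B = A + G)
  rw [cA, cB, cK]
  have cBA' : (B:ℝ) - A = (G:ℝ) := by rw [cBA]; ring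
  rw [cBA']
  have h1u : 1 - (n:ℝ)/u = ((u-n:ℕ):ℝ)/u := by
    rw [← cK]; field_simp
  rw [h1u]
  -- positivity of the RHS
  have hRpos : (0:ℝ) <
      (2 * π * (A:ℝ)) ^ (((m : ℝ) - 1) / 2) *
      (((u-n:ℕ):ℝ)/u) ^ (((m : ℝ) - 1) / 2) *
      (m : ℝ) ^ (-(1 / 2) : ℝ) *
      Real.exp (1 / (12 * (u : ℝ) + 1) + (m : ℝ) / (12 * (G:ℝ) + 1)
        + (m : ℝ) / (12 * (A:ℝ) + 1) - 1 / (12 * ((u-n:ℕ):ℝ)) - 1 / (12 * (n : ℝ))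
        - (m : ℝ) / (12 * (B:ℝ))) := by
    have b1 : (0:ℝ) < 2 * π * A := by positivity
    have b2 : (0:ℝ) < ((u-n:ℕ):ℝ)/u := by positivity
    exact mul_pos (mul_pos (mul_pos (rpow_pos_of_pos b1 _) (rpow_pos_of_pos b2 _))
      (rpow_pos_of_pos hm0 _)) (exp_pos _)
  -- the LHS as an exponential
  have hfu : (0:ℝ) < (u.factorial:ℝ) := by exact_mod_cast u.factorial_pos
  have hfn : (0:ℝ) < (n.factorial:ℝ) := by exact_mod_cast n.factorial_pos
  have hfk : (0:ℝ) < ((u-n).factorial:ℝ) := by exact_mod_cast (u-n).factorial_pos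
  have hfB : (0:ℝ) < (B.factorial:ℝ) := by exact_mod_cast B.factorial_pos
  have hfA : (0:ℝ) < (A.factorial:ℝ) := by exact_mod_cast A.factorial_pos
  have hfG : (0:ℝ) < (G.factorial:ℝ) := by exact_mod_cast G.factorial_pos
  have hX : (Nat.choose u n : ℝ) / (Nat.choose B A : ℝ) ^ m =
      exp (Real.log (u.factorial:ℝ) - Real.log (n.factorial:ℝ)
        - Real.log ((u-n).factorial:ℝ) - (m:ℝ) * Real.log (B.factorial:ℝ)
        + (m:ℝ) * Real.log (A.factorial:ℝ) + (m:ℝ) * Real.log (G.factorial:ℝ)) := by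
    have hcb : (Nat.choose B A : ℝ) = B.factorial / (A.factorial * G.factorial) := by
      rw [Nat.cast_choose ℝ hAB, hBAG]
    rw [Nat.cast_choose ℝ hnu.le, hcb]
    rw [show Real.log (u.factorial:ℝ) - Real.log (n.factorial:ℝ)
        - Real.log ((u-n).factorial:ℝ) - (m:ℝ) * Real.log (B.factorial:ℝ)
        + (m:ℝ) * Real.log (A.factorial:ℝ) + (m:ℝ) * Real.log (G.factorial:ℝ)
      = (Real.log (u.factorial:ℝ) - Real.log (n.factorial:ℝ) - Real.log ((u-n).factorial:ℝ))
        - (m:ℝ) * (Real.log (B.factorial:ℝ) - Real.log (A.factorial:ℝ)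
          - Real.log (G.factorial:ℝ)) from by ring]
    rw [exp_sub, exp_nat_mul, exp_sub, exp_sub, exp_sub, exp_sub,
      exp_log hfu, exp_log hfn, exp_log hfk, exp_log hfB, exp_log hfA, exp_log hfG]
    rw [div_pow]
    field_simp
    rw [← mul_pow]; congr 1; field_simp
  rw [ge_iff_le, hX]
  -- log identities
  have e2pa : Real.log (2*π*(A:ℝ)) = Real.log 2 + Real.log π + Real.log A := by
    rw [log_mul (by positivity) hA0.ne', log_mul (by norm_num) pi_ne_zero]
  have eKu : Real.log (((u-n:ℕ):ℝ)/u) = Real.log (G:ℝ) - Real.log (B:ℝ) := by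
    rw [lk, lu, log_div (by positivity) (by positivity), log_mul hm0.ne' hG0.ne',
      log_mul hm0.ne' hB0.ne']
    ring
  have e_u : Real.log (2*(u:ℝ)) = Real.log 2 + Real.log (m:ℝ) + Real.log (B:ℝ) := by
    rw [lu, log_mul (by norm_num) (by positivity), log_mul hm0.ne' hB0.ne']; ring
  have e_n : Real.log (2*(n:ℝ)) = Real.log 2 + Real.log (m:ℝ) + Real.log (A:ℝ) := by
    rw [ln', log_mul (by norm_num) (by positivity), log_mul hm0.ne' hA0.ne']; ring
  have e_k : Real.log (2*((u-n:ℕ):ℝ)) = Real.log 2 + Real.log (m:ℝ) + Real.log (G:ℝ) := by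
    rw [lk, log_mul (by norm_num) (by positivity), log_mul hm0.ne' hG0.ne']; ring
  have e_B : Real.log (2*(B:ℝ)) = Real.log 2 + Real.log (B:ℝ) := by
    rw [log_mul (by norm_num) hB0.ne']
  have e_A : Real.log (2*(A:ℝ)) = Real.log 2 + Real.log (A:ℝ) := by
    rw [log_mul (by norm_num) hA0.ne']
  have e_G : Real.log (2*(G:ℝ)) = Real.log 2 + Real.log (G:ℝ) := by
    rw [log_mul (by norm_num) hG0.ne']
  have f_u : Real.log (u:ℝ) = Real.log (m:ℝ) + Real.log (B:ℝ) := by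
    rw [lu, log_mul hm0.ne' hB0.ne']
  have f_n : Real.log (n:ℝ) = Real.log (m:ℝ) + Real.log (A:ℝ) := by
    rw [ln', log_mul hm0.ne' hA0.ne']
  have f_k : Real.log ((u-n:ℕ):ℝ) = Real.log (m:ℝ) + Real.log (G:ℝ) := by
    rw [lk, log_mul hm0.ne' hG0.ne']
  -- Robbins bounds
  have R1 := log_factorial_ge u hu1
  have R2 := log_factorial_le n hn1
  have R3 := log_factorial_le (u-n) hK1
  have R4 := log_factorial_le B hB1
  have R5 := log_factorial_ge A hA1
  have R6 := log_factorial_ge G hG1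
  have R4' : (m:ℝ) * Real.log (B.factorial:ℝ) ≤
      (m:ℝ) * (log (√π) + 1 / (12*(B:ℝ)) + 1/2 * log (2*(B:ℝ)) + (B:ℝ) * log (B:ℝ) - B) :=
    mul_le_mul_of_nonneg_left R4 hm0.le
  have R5' : (m:ℝ) * (log (√π) + 1 / (12*(A:ℝ)+1) + 1/2 * log (2*(A:ℝ)) + (A:ℝ) * log (A:ℝ) - A)
      ≤ (m:ℝ) * Real.log (A.factorial:ℝ) := mul_le_mul_of_nonneg_left R5 hm0.le
  have R6' : (m:ℝ) * (log (√π) + 1 / (12*(G:ℝ)+1) + 1/2 * log (2*(G:ℝ)) + (G:ℝ) * log (G:ℝ) - G)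
      ≤ (m:ℝ) * Real.log (G.factorial:ℝ) := mul_le_mul_of_nonneg_left R6 hm0.le
  calc (2 * π * (A:ℝ)) ^ (((m : ℝ) - 1) / 2) *
      (((u-n:ℕ):ℝ)/u) ^ (((m : ℝ) - 1) / 2) *
      (m : ℝ) ^ (-(1 / 2) : ℝ) *
      Real.exp (1 / (12 * (u : ℝ) + 1) + (m : ℝ) / (12 * (G:ℝ) + 1)
        + (m : ℝ) / (12 * (A:ℝ) + 1) - 1 / (12 * ((u-n:ℕ):ℝ)) - 1 / (12 * (n : ℝ))
        - (m : ℝ) / (12 * (B:ℝ)))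
      = exp (((m : ℝ) - 1) / 2 * Real.log (2*π*(A:ℝ))
        + ((m : ℝ) - 1) / 2 * Real.log (((u-n:ℕ):ℝ)/u)
        + (-(1 / 2) : ℝ) * Real.log (m:ℝ)
        + (1 / (12 * (u : ℝ) + 1) + (m : ℝ) / (12 * (G:ℝ) + 1)
        + (m : ℝ) / (12 * (A:ℝ) + 1) - 1 / (12 * ((u-n:ℕ):ℝ)) - 1 / (12 * (n : ℝ))
        - (m : ℝ) / (12 * (B:ℝ)))) := by
        have b1 : (0:ℝ) < 2 * π * A := by positivity
        have b2 : (0:ℝ) < ((u-n:ℕ):ℝ)/u := by positivity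
        rw [Real.rpow_def_of_pos b1, Real.rpow_def_of_pos b2, Real.rpow_def_of_pos hm0,
          ← exp_add, ← exp_add, ← exp_add]
        congr 1
        ring
    _ ≤ _ := by
        rw [exp_le_exp]
        have hZ : ((m : ℝ) - 1) / 2 * Real.log (2*π*(A:ℝ))
            + ((m : ℝ) - 1) / 2 * Real.log (((u-n:ℕ):ℝ)/u)
            + (-(1 / 2) : ℝ) * Real.log (m:ℝ)
            + (1 / (12 * (u : ℝ) + 1) + (m : ℝ) / (12 * (G:ℝ) + 1)
            + (m : ℝ) / (12 * (A:ℝ) + 1) - 1 / (12 * ((u-n:ℕ):ℝ)) - 1 / (12 * (n : ℝ))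
            - (m : ℝ) / (12 * (B:ℝ)))
          = (log (√π) + 1 / (12*(u:ℝ)+1) + 1/2 * log (2*(u:ℝ)) + (u:ℝ) * log (u:ℝ) - u)
            - (log (√π) + 1 / (12*(n:ℝ)) + 1/2 * log (2*(n:ℝ)) + (n:ℝ) * log (n:ℝ) - n)
            - (log (√π) + 1 / (12*((u-n:ℕ):ℝ)) + 1/2 * log (2*((u-n:ℕ):ℝ))
              + ((u-n:ℕ):ℝ) * log ((u-n:ℕ):ℝ) - ((u-n:ℕ):ℝ))
            - (m:ℝ) * (log (√π) + 1 / (12*(B:ℝ)) + 1/2 * log (2*(B:ℝ)) + (B:ℝ) * log (B:ℝ) - B)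
            + (m:ℝ) * (log (√π) + 1 / (12*(A:ℝ)+1) + 1/2 * log (2*(A:ℝ)) + (A:ℝ) * log (A:ℝ) - A)
            + (m:ℝ) * (log (√π) + 1 / (12*(G:ℝ)+1) + 1/2 * log (2*(G:ℝ)) + (G:ℝ) * log (G:ℝ) - G)
            := by
          rw [log_sqrt pi_pos.le, e2pa, eKu, e_u, e_n, e_k, e_B, e_A, e_G, f_u, f_n, f_k,
            lu, ln', lk, cBA]
          ring
        rw [hZ]
        linarith [R1, R2, R3, R4', R5', R6']
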